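/- Let 0<q<1 and let g(z) = Σ_{k≥0} a_k z^k for complex |z| < 1/q. Then for every complex z with |z| < 1/q one has the functional equation (1−qz)^2 g(z) = (1−q^2 z)^2 g(q^2 z). -/

import Mathlib

-- key recurrence identity
lemma stmt4_rec (q : ℝ) (hq0 : 0 < q) (a : ℕ → ℝ)
    (ha : ∀ k : ℕ, 1 ≤ k →
      2 * (1 - q ^ (2 * k + 1)) * a k
        = q⁻¹ * (1 - q ^ (2 * k + 2)) * a (k + 1) + q * (1 - q ^ (2 * k)) * a (k - 1)) :
    ∀ m : ℕ, a (m+2) - 2*q*a (m+1) + q^2 * a m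
      = q^(2*m+4) * (a (m+2) - 2*a (m+1) + a m) := by
  intro m
  have h := ha (m+1) (Nat.le_add_left 1 m)
  simp only [Nat.add_sub_cancel] at h
  have hq : q ≠ 0 := ne_of_gt hq0
  field_simp at h
  ring_nf at h ⊢
  linarith

lemma stmt4_key1 (q : ℝ) (hq0 : 0 < q) (a : ℕ → ℝ) (ha0 : a 0 = 1)
    (ha1 : 2 * (1 - q) * a 0 = q⁻¹ * (1 - q ^ 2) * a 1) :
    a 1 - 2*q*a 0 = q^2*a 1 - 2*q^2*a 0 := by
  have hq : q ≠ 0 := ne_of_gt hq0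
  rw [ha0] at ha1 ⊢
  field_simp at ha1
  ring_nf at ha1 ⊢
  linarith

lemma stmt4_growth (q : ℝ) (hq0 : 0 < q) (hq1 : q < 1) (a : ℕ → ℝ) (ha0 : a 0 = 1)
    (ha1 : 2 * (1 - q) * a 0 = q⁻¹ * (1 - q ^ 2) * a 1)
    (hrec : ∀ m : ℕ, a (m+2) - 2*q*a (m+1) + q^2 * a m
      = q^(2*m+4) * (a (m+2) - 2*a (m+1) + a m)) :
    ∀ ε : ℝ, 0 < ε → ∃ C : ℝ, 0 < C ∧ ∀ k, |a k| ≤ C * ((1+ε)*q)^k := by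
  intro ε hε
  have hq : q ≠ 0 := ne_of_gt hq0
  set c : ℕ → ℝ := fun k => a k / q ^ k with hcdef
  have hqpow : ∀ n : ℕ, (0:ℝ) < q ^ n := fun n => pow_pos hq0 n
  have hac : ∀ k, a k = q ^ k * c k := by
    intro k; rw [hcdef]; field_simp
  have hc0 : c 0 = 1 := by simp [hcdef, ha0]
  have h1q : (1:ℝ) + q ≠ 0 := by positivity
  have hc1 : c 1 = 2 / (1 + q) := by
    rw [ha0] at ha1
    rw [hcdef]
    field_simp at ha1 ⊢
    nlinarith [ha1]
  have hcrec : ∀ m : ℕ, (1 - q^(2*m+4)) * c (m+2)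
      = 2*(1 - q^(2*m+3)) * c (m+1) - (1 - q^(2*m+2)) * c m := by
    intro m
    have h := hrec m
    rw [hac (m+2), hac (m+1), hac m] at h
    apply mul_left_cancel₀ (pow_ne_zero (m+2) hq)
    linear_combination h
  have he : ∀ m : ℕ, (1 - q^(2*m+4)) * (c (m+2) - c (m+1))
      = (1 - q^(2*m+2)) * (c (m+1) - c m) + q^(2*m+2) * (1-q)^2 * c (m+1) := by
    intro m
    linear_combination hcrec m
  have hlt1 : ∀ n : ℕ, n ≠ 0 → q ^ n < 1 := fun n hn => pow_lt_one₀ hq0.le hq1 hn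
  have hmono : ∀ k, 0 < c k ∧ c k ≤ c (k+1) := by
    intro k
    induction k with
    | zero =>
      refine ⟨by rw [hc0]; norm_num, ?_⟩
      rw [hc0, hc1]
      rw [le_div_iff₀ (by positivity)]
      linarith
    | succ m ih =>
      obtain ⟨h1, h2⟩ := ih
      have hcm1 : 0 < c (m+1) := lt_of_lt_of_le h1 h2
      refine ⟨hcm1, ?_⟩
      have hp : 0 < 1 - q^(2*m+4) := by
        have := hlt1 (2*m+4) (by omega); linarith
      have hp2 : 0 < 1 - q^(2*m+2) := by
        have := hlt1 (2*m+2) (by omega); linarith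
      nlinarith [he m, sq_nonneg (1-q), hqpow (2*m+2), mul_nonneg (mul_nonneg (hqpow (2*m+2)).le (sq_nonneg (1-q))) hcm1.le]
  have hestep : ∀ m : ℕ, c (m+2) - c (m+1) ≤ (c (m+1) - c m) + q^(2*m+2) * c (m+1) := by
    intro m
    obtain ⟨h1, h2⟩ := hmono m
    have hcm1 : 0 < c (m+1) := lt_of_lt_of_le h1 h2
    have hp : 0 < 1 - q^(2*m+4) := by
      have := hlt1 (2*m+4) (by omega); linarith
    have hple : q^(2*m+4) ≤ q^(2*m+2) :=
      pow_le_pow_of_le_one hq0.le hq1.le (by omega)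
    have hq2 : q^(2*m+4) ≤ q^2 := pow_le_pow_of_le_one hq0.le hq1.le (by omega)
    have k1 : (1-q)^2 ≤ 1 - q^(2*m+4) := by nlinarith
    have k2 : 1 - q^(2*m+2) ≤ 1 - q^(2*m+4) := by linarith
    nlinarith [he m, mul_nonneg (hqpow (2*m+2)).le hcm1.le, mul_le_mul_of_nonneg_left k1 (mul_nonneg (hqpow (2*m+2)).le hcm1.le)]
  -- the auxiliary sequence s
  set s : ℕ → ℝ := fun k => ε * c k + (c (k+1) - c k) with hsdef
  have hs_pos : ∀ k, 0 < s k := by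
    intro k; obtain ⟨h1, h2⟩ := hmono k
    have : 0 < ε * c k := mul_pos hε h1
    simp only [hsdef]; nlinarith
  have hcs : ∀ k, c k ≤ s k / ε := by
    intro k; obtain ⟨h1, h2⟩ := hmono k
    rw [le_div_iff₀ hε]
    simp only [hsdef]; nlinarith
  have hstep : ∀ k, ε * s (k+1) ≤ (1+ε) * (ε + q^(2*k+2)) * s k := by
    intro k
    obtain ⟨h1, h2⟩ := hmono k
    obtain ⟨h1', h2'⟩ := hmono (k+1)
    have hes := hestep k
    have hQ := hqpow (2*k+2)
    simp only [hsdef]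
    nlinarith [mul_le_mul_of_nonneg_left hes hε.le,
      mul_nonneg hQ.le (sub_nonneg.2 h2),
      mul_nonneg (mul_nonneg (mul_nonneg hε.le hε.le) hε.le) h1.le,
      mul_nonneg (mul_nonneg (mul_nonneg hε.le hε.le) hQ.le) h1.le]
  have hsucc : ∀ k, s (k+1) ≤ (1+ε) * Real.exp (q^(2*k+2)/ε) * s k := by
    intro k
    have hQ := hqpow (2*k+2)
    have e1 : ε + q^(2*k+2) ≤ ε * Real.exp (q^(2*k+2)/ε) := by
      have h := Real.add_one_le_exp (q^(2*k+2)/ε)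
      have h2 := mul_le_mul_of_nonneg_left h hε.le
      rw [mul_add, mul_one, mul_div_cancel₀ _ (ne_of_gt hε)] at h2
      linarith
    have h2 : ε * s (k+1) ≤ ε * ((1+ε) * Real.exp (q^(2*k+2)/ε) * s k) := by
      calc ε * s (k+1) ≤ (1+ε)*(ε + q^(2*k+2))*s k := hstep k
        _ ≤ (1+ε)*(ε * Real.exp (q^(2*k+2)/ε))*s k := by
            exact mul_le_mul_of_nonneg_right
              (mul_le_mul_of_nonneg_left e1 (by positivity)) (hs_pos k).le
        _ = ε * ((1+ε) * Real.exp (q^(2*k+2)/ε) * s k) := by ring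
    exact le_of_mul_le_mul_left h2 hε
  have hbound : ∀ k, s k ≤ s 0 * (1+ε)^k
      * Real.exp ((∑ j ∈ Finset.range k, q^(2*j+2))/ε) := by
    intro k
    induction k with
    | zero => simp
    | succ k ih =>
      have heq : s 0 * (1+ε)^(k+1) * Real.exp ((∑ j ∈ Finset.range (k+1), q^(2*j+2))/ε)
          = (1+ε) * Real.exp (q^(2*k+2)/ε)
            * (s 0 * (1+ε)^k * Real.exp ((∑ j ∈ Finset.range k, q^(2*j+2))/ε)) := by
        rw [Finset.sum_range_succ, add_div, Real.exp_add]; ring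
      calc s (k+1) ≤ (1+ε) * Real.exp (q^(2*k+2)/ε) * s k := hsucc k
        _ ≤ (1+ε) * Real.exp (q^(2*k+2)/ε)
            * (s 0 * (1+ε)^k * Real.exp ((∑ j ∈ Finset.range k, q^(2*j+2))/ε)) := by
            exact mul_le_mul_of_nonneg_left ih (by positivity)
        _ = _ := heq.symm
  have hq2 : q^2 < 1 := by nlinarith
  have hgeo : ∀ k : ℕ, (∑ j ∈ Finset.range k, q^(2*j+2)) ≤ q^2/(1-q^2) := by
    intro k
    have hrw : ∑ j ∈ Finset.range k, q^(2*j+2) = q^2 * ∑ j ∈ Finset.range k, (q^2)^j := by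
      rw [Finset.mul_sum]
      apply Finset.sum_congr rfl
      intro j _
      rw [← pow_mul, ← pow_add]
      congr 1
      ring
    rw [hrw]
    have hgs : ∑ j ∈ Finset.range k, (q^2)^j ≤ 1/(1-q^2) := by
      rw [geom_sum_eq (ne_of_lt hq2) k]
      rw [show ((q^2)^k - 1)/(q^2-1) = (1-(q^2)^k)/(1-q^2) by
        rw [div_eq_div_iff (by nlinarith) (by nlinarith)]; ring]
      rw [div_le_div_iff₀ (by linarith) (by linarith)]
      nlinarith [pow_nonneg (sq_nonneg q) k]
    calc q^2 * ∑ j ∈ Finset.range k, (q^2)^j ≤ q^2 * (1/(1-q^2)) :=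
          mul_le_mul_of_nonneg_left hgs (sq_nonneg q)
      _ = q^2/(1-q^2) := by ring
  refine ⟨s 0 * Real.exp ((q^2/(1-q^2))/ε) / ε, div_pos (mul_pos (hs_pos 0) (Real.exp_pos _)) hε, ?_⟩
  intro k
  have hck := (hmono k).1
  have hapos : 0 < a k := by rw [hac k]; exact mul_pos (hqpow k) hck
  have hexpmono : Real.exp ((∑ j ∈ Finset.range k, q^(2*j+2))/ε)
      ≤ Real.exp ((q^2/(1-q^2))/ε) :=
    Real.exp_le_exp.2 (div_le_div_of_nonneg_right (hgeo k) hε.le)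
  calc |a k| = a k := abs_of_pos hapos
    _ = q^k * c k := hac k
    _ ≤ q^k * (s k / ε) := mul_le_mul_of_nonneg_left (hcs k) (hqpow k).le
    _ ≤ q^k * ((s 0 * (1+ε)^k * Real.exp ((q^2/(1-q^2))/ε)) / ε) := by
        have h1 : s k ≤ s 0 * (1+ε)^k * Real.exp ((q^2/(1-q^2))/ε) := by
          calc s k ≤ s 0 * (1+ε)^k * Real.exp ((∑ j ∈ Finset.range k, q^(2*j+2))/ε) :=
                hbound k
            _ ≤ s 0 * (1+ε)^k * Real.exp ((q^2/(1-q^2))/ε) := by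
                exact mul_le_mul_of_nonneg_left hexpmono (mul_nonneg (hs_pos 0).le (by positivity))
        exact mul_le_mul_of_nonneg_left (div_le_div_of_nonneg_right h1 hε.le) (hqpow k).le
    _ = s 0 * Real.exp ((q^2/(1-q^2))/ε) / ε * ((1+ε)*q)^k := by
        rw [mul_pow]; ring

def s4A1 (q : ℝ) (a : ℕ → ℝ) (z : ℂ) : ℕ → ℂ
  | 0 => 0
  | (m+1) => 2*(q:ℂ)*(a m : ℂ)*z^(m+1)

def s4A2 (q : ℝ) (a : ℕ → ℝ) (z : ℂ) : ℕ → ℂ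
  | 0 => 0
  | 1 => 0
  | (m+2) => (q:ℂ)^2*(a m : ℂ)*z^(m+2)

def s4B1 (q : ℝ) (a : ℕ → ℝ) (z : ℂ) : ℕ → ℂ
  | 0 => 0
  | (m+1) => 2*(q:ℂ)^(2*m+2)*(a m : ℂ)*z^(m+1)

def s4B2 (q : ℝ) (a : ℕ → ℝ) (z : ℂ) : ℕ → ℂ
  | 0 => 0
  | 1 => 0
  | (m+2) => (q:ℂ)^(2*m+4)*(a m : ℂ)*z^(m+2)

lemma stmt4_main (q : ℝ) (a : ℕ → ℝ) (z : ℂ)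
    (hf : Summable (fun k => (a k : ℂ) * z ^ k))
    (hg : Summable (fun k => (a k : ℂ) * ((q:ℂ)^2 * z) ^ k))
    (hkey1 : a 1 - 2*q*a 0 = q^2*a 1 - 2*q^2*a 0)
    (hkey2 : ∀ m : ℕ, a (m+2) - 2*q*a (m+1) + q^2 * a m
      = q^(2*m+4) * (a (m+2) - 2*a (m+1) + a m)) :
    (1 - (q:ℂ) * z) ^ 2 * ∑' k : ℕ, (a k : ℂ) * z ^ k
      = (1 - (q:ℂ) ^ 2 * z) ^ 2 * ∑' k : ℕ, (a k : ℂ) * ((q:ℂ) ^ 2 * z) ^ k := by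
  have hA1 : Summable (s4A1 q a z) := by
    apply (summable_nat_add_iff 1).1
    apply Summable.congr (hf.mul_left (2*(q:ℂ)*z))
    intro n
    show (2*(q:ℂ)*z) * ((a n : ℂ) * z^n) = 2*(q:ℂ)*(a n : ℂ)*z^(n+1)
    ring
  have hA2 : Summable (s4A2 q a z) := by
    apply (summable_nat_add_iff 2).1
    apply Summable.congr (hf.mul_left ((q:ℂ)^2*z^2))
    intro n
    show ((q:ℂ)^2*z^2) * ((a n : ℂ) * z^n) = (q:ℂ)^2*(a n : ℂ)*z^(n+2)
    ring
  have hB1 : Summable (s4B1 q a z) := by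
    apply (summable_nat_add_iff 1).1
    apply Summable.congr (hg.mul_left (2*(q:ℂ)^2*z))
    intro n
    show (2*(q:ℂ)^2*z) * ((a n : ℂ) * ((q:ℂ)^2*z)^n) = 2*(q:ℂ)^(2*n+2)*(a n : ℂ)*z^(n+1)
    rw [mul_pow, ← pow_mul]
    ring_nf
  have hB2 : Summable (s4B2 q a z) := by
    apply (summable_nat_add_iff 2).1
    apply Summable.congr (hg.mul_left ((q:ℂ)^4*z^2))
    intro n
    show ((q:ℂ)^4*z^2) * ((a n : ℂ) * ((q:ℂ)^2*z)^n) = (q:ℂ)^(2*n+4)*(a n : ℂ)*z^(n+2)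
    rw [mul_pow, ← pow_mul]
    ring_nf
  have tA1 : ∑' n, s4A1 q a z n = (2*(q:ℂ)*z) * ∑' k : ℕ, ((a k : ℂ) * z^k) := by
    calc ∑' n, s4A1 q a z n = s4A1 q a z 0 + ∑' n, s4A1 q a z (n+1) := Summable.tsum_eq_zero_add hA1
      _ = ∑' n : ℕ, (2*(q:ℂ)*z) * ((a n : ℂ)*z^n) := by
          rw [show s4A1 q a z 0 = 0 from rfl, zero_add]
          exact tsum_congr fun n => by
            show 2*(q:ℂ)*(a n : ℂ)*z^(n+1) = (2*(q:ℂ)*z) * ((a n : ℂ)*z^n)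
            ring
      _ = (2*(q:ℂ)*z) * ∑' k : ℕ, ((a k : ℂ) * z^k) := tsum_mul_left
  have tA2 : ∑' n, s4A2 q a z n = ((q:ℂ)^2*z^2) * ∑' k : ℕ, ((a k : ℂ) * z^k) := by
    calc ∑' n, s4A2 q a z n = s4A2 q a z 0 + ∑' n, s4A2 q a z (n+1) := Summable.tsum_eq_zero_add hA2
      _ = s4A2 q a z 0 + (s4A2 q a z (0+1) + ∑' n, s4A2 q a z (n+1+1)) := by
          rw [Summable.tsum_eq_zero_add ((summable_nat_add_iff 1).2 hA2)]
      _ = ∑' n : ℕ, ((q:ℂ)^2*z^2) * ((a n : ℂ)*z^n) := by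
          rw [show s4A2 q a z 0 = 0 from rfl, show s4A2 q a z (0+1) = 0 from rfl,
            zero_add, zero_add]
          exact tsum_congr fun n => by
            show (q:ℂ)^2*(a n : ℂ)*z^(n+2) = ((q:ℂ)^2*z^2) * ((a n : ℂ)*z^n)
            ring
      _ = ((q:ℂ)^2*z^2) * ∑' k : ℕ, ((a k : ℂ) * z^k) := tsum_mul_left
  have tB1 : ∑' n, s4B1 q a z n
      = (2*(q:ℂ)^2*z) * ∑' k : ℕ, ((a k : ℂ) * ((q:ℂ)^2*z)^k) := by
    calc ∑' n, s4B1 q a z n = s4B1 q a z 0 + ∑' n, s4B1 q a z (n+1) := Summable.tsum_eq_zero_add hB1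
      _ = ∑' n : ℕ, (2*(q:ℂ)^2*z) * ((a n : ℂ)*((q:ℂ)^2*z)^n) := by
          rw [show s4B1 q a z 0 = 0 from rfl, zero_add]
          exact tsum_congr fun n => by
            show 2*(q:ℂ)^(2*n+2)*(a n : ℂ)*z^(n+1) = (2*(q:ℂ)^2*z) * ((a n : ℂ)*((q:ℂ)^2*z)^n)
            rw [mul_pow, ← pow_mul]
            ring_nf
      _ = (2*(q:ℂ)^2*z) * ∑' k : ℕ, ((a k : ℂ) * ((q:ℂ)^2*z)^k) := tsum_mul_left
  have tB2 : ∑' n, s4B2 q a z n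
      = ((q:ℂ)^4*z^2) * ∑' k : ℕ, ((a k : ℂ) * ((q:ℂ)^2*z)^k) := by
    calc ∑' n, s4B2 q a z n = s4B2 q a z 0 + ∑' n, s4B2 q a z (n+1) := Summable.tsum_eq_zero_add hB2
      _ = s4B2 q a z 0 + (s4B2 q a z (0+1) + ∑' n, s4B2 q a z (n+1+1)) := by
          rw [Summable.tsum_eq_zero_add ((summable_nat_add_iff 1).2 hB2)]
      _ = ∑' n : ℕ, ((q:ℂ)^4*z^2) * ((a n : ℂ)*((q:ℂ)^2*z)^n) := by
          rw [show s4B2 q a z 0 = 0 from rfl, show s4B2 q a z (0+1) = 0 from rfl,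
            zero_add, zero_add]
          exact tsum_congr fun n => by
            show (q:ℂ)^(2*n+4)*(a n : ℂ)*z^(n+2) = ((q:ℂ)^4*z^2) * ((a n : ℂ)*((q:ℂ)^2*z)^n)
            rw [mul_pow, ← pow_mul]
            ring_nf
      _ = ((q:ℂ)^4*z^2) * ∑' k : ℕ, ((a k : ℂ) * ((q:ℂ)^2*z)^k) := tsum_mul_left
  have h1 : (1 - (q:ℂ)*z)^2 * ∑' k : ℕ, ((a k : ℂ) * z^k)
      = ∑' n : ℕ, ((a n : ℂ)*z^n - s4A1 q a z n + s4A2 q a z n) := by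
    rw [Summable.tsum_add (hf.sub hA1) hA2, Summable.tsum_sub hf hA1, tA1, tA2]
    ring
  have h2 : (1 - (q:ℂ)^2*z)^2 * ∑' k : ℕ, ((a k : ℂ) * ((q:ℂ)^2*z)^k)
      = ∑' n : ℕ, ((a n : ℂ)*((q:ℂ)^2*z)^n - s4B1 q a z n + s4B2 q a z n) := by
    rw [Summable.tsum_add (hg.sub hB1) hB2, Summable.tsum_sub hg hB1, tB1, tB2]
    ring
  rw [h1, h2]
  apply tsum_congr
  intro n
  cases n with
  | zero =>
    show (a 0 : ℂ)*z^0 - 0 + 0 = (a 0 : ℂ)*((q:ℂ)^2*z)^0 - 0 + 0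
    simp
  | succ n =>
    cases n with
    | zero =>
      have hc := congrArg (Complex.ofReal) hkey1
      push_cast at hc
      show (a 1 : ℂ)*z^1 - 2*(q:ℂ)*(a 0 : ℂ)*z^(0+1) + 0
        = (a 1 : ℂ)*((q:ℂ)^2*z)^1 - 2*(q:ℂ)^(2*0+2)*(a 0 : ℂ)*z^(0+1) + 0
      linear_combination z * hc
    | succ m =>
      have hc := congrArg (Complex.ofReal) (hkey2 m)
      push_cast at hc
      show (a (m+2) : ℂ)*z^(m+2) - 2*(q:ℂ)*(a (m+1) : ℂ)*z^(m+2) + (q:ℂ)^2*(a m : ℂ)*z^(m+2)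
        = (a (m+2) : ℂ)*((q:ℂ)^2*z)^(m+2) - 2*(q:ℂ)^(2*(m+1)+2)*(a (m+1) : ℂ)*z^(m+2)
          + (q:ℂ)^(2*m+4)*(a m : ℂ)*z^(m+2)
      rw [mul_pow, ← pow_mul]
      linear_combination z^(m+2) * hc

lemma stmt4_summable (q : ℝ) (hq0 : 0 < q) (hq1 : q < 1) (a : ℕ → ℝ)
    (hgrow : ∀ ε : ℝ, 0 < ε → ∃ C : ℝ, 0 < C ∧ ∀ k, |a k| ≤ C * ((1+ε)*q)^k) :
    ∀ z : ℂ, ‖z‖ < 1 / q → Summable (fun k => (a k : ℂ) * z ^ k) := by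
  intro z hz
  have ht : q * ‖z‖ < 1 := by
    have := (lt_div_iff₀' hq0).1 hz
    linarith [mul_comm q ‖z‖ ▸ this]
  have ht0 : (0:ℝ) ≤ q * ‖z‖ := by positivity
  set t := q * ‖z‖ with htdef
  set ε := (1 - t)/(1 + t) with hεdef
  have hε : 0 < ε := div_pos (by linarith) (by linarith)
  have hr : (1+ε)*t < 1 := by
    have h1t : (1:ℝ) + t ≠ 0 := by linarith
    have h2 : (1:ℝ)+ε = 2/(1+t) := by rw [hεdef]; field_simp; ring
    have h3 : (1+ε)*t = 2*t/(1+t) := by rw [h2]; ring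
    rw [h3, div_lt_one (by linarith)]
    linarith
  obtain ⟨C, hC, hbd⟩ := hgrow ε hε
  apply Summable.of_norm_bounded (g := fun k => C * ((1+ε)*t)^k)
  · exact (summable_geometric_of_lt_one (by positivity) hr).mul_left C
  · intro k
    rw [norm_mul, norm_pow, Complex.norm_real]
    calc |a k| * ‖z‖^k ≤ (C * ((1+ε)*q)^k) * ‖z‖^k := by
          exact mul_le_mul_of_nonneg_right (hbd k) (by positivity)
      _ = C * ((1+ε)*t)^k := by rw [htdef, mul_pow, mul_pow, mul_pow]; ring

/-- Let `0 < q < 1`, let `(a k)` satisfy the recurrence of the context, and let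
`g z = Σ_{k≥0} a_k z^k` for complex `‖z‖ < 1/q`. Then for every complex `z` with `‖z‖ < 1/q`
one has the functional equation `(1 - qz)² g(z) = (1 - q²z)² g(q²z)`. -/
theorem stmt4 (q : ℝ) (hq0 : 0 < q) (hq1 : q < 1) (a : ℕ → ℝ)
    (ha0 : a 0 = 1)
    (ha1 : 2 * (1 - q) * a 0 = q⁻¹ * (1 - q ^ 2) * a 1)
    (ha : ∀ k : ℕ, 1 ≤ k →
      2 * (1 - q ^ (2 * k + 1)) * a k
        = q⁻¹ * (1 - q ^ (2 * k + 2)) * a (k + 1) + q * (1 - q ^ (2 * k)) * a (k - 1)) :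
    ∀ z : ℂ, ‖z‖ < 1 / q →
      (1 - (q : ℂ) * z) ^ 2 * ∑' k : ℕ, (a k : ℂ) * z ^ k
        = (1 - (q : ℂ) ^ 2 * z) ^ 2 * ∑' k : ℕ, (a k : ℂ) * ((q : ℂ) ^ 2 * z) ^ k := by
  intro z hz
  have hrec := stmt4_rec q hq0 a ha
  have hgrow := stmt4_growth q hq0 hq1 a ha0 ha1 hrec
  have hf := stmt4_summable q hq0 hq1 a hgrow z hz
  have hw : ‖(q:ℂ)^2*z‖ < 1/q := by
    rw [norm_mul, norm_pow, Complex.norm_real, Real.norm_eq_abs, abs_of_pos hq0]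
    have h1 : q^2 * ‖z‖ < q^2 * (1/q) := by
      apply mul_lt_mul_of_pos_left hz (by positivity)
    have h2 : q^2 * (1/q) = q := by field_simp [ne_of_gt hq0]
    have h3 : q < 1/q := by
      rw [lt_div_iff₀ hq0]; nlinarith
    linarith
  have hg := stmt4_summable q hq0 hq1 a hgrow ((q:ℂ)^2*z) hw
  exact stmt4_main q a z hf hg (stmt4_key1 q hq0 a ha0 ha1) hrec
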